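/- Let ω ≤ λ < μ < κ be cardinals and X a topological space with cellularity c(X) ≤ μ. If X can be partitioned into λ many pairwise disjoint dense OHI subspaces and also into κ many pairwise disjoint dense OHI subspaces, then X can be partitioned into μ many pairwise disjoint dense OHI subspaces. -/
import Mathlib

open Cardinal Set

universe u

variable {X : Type u} [TopologicalSpace X]

/-- `T` is a dense subset of the subspace `S`. -/
def DenseIn (T S : Set X) : Prop := T ⊆ S ∧ S ⊆ closure T

/-- The subspace `A` is OHI: every dense subset of `A` contains a relatively open dense
subset. -/
def OHIIn (A : Set X) : Prop :=
  ∀ T : Set X, DenseIn T A →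
    ∃ T' ⊆ T, DenseIn T' A ∧ ∃ U : Set X, IsOpen U ∧ T' = U ∩ A

/-- `X` can be partitioned into `μ` many pairwise disjoint dense OHI subspaces. -/
def PartitionOHI (X : Type u) [TopologicalSpace X] (μ : Cardinal.{u}) : Prop :=
  ∃ 𝒮 : Set (Set X), #↥𝒮 = μ ∧ 𝒮.PairwiseDisjoint id ∧ ⋃₀ 𝒮 = Set.univ ∧
    ∀ A ∈ 𝒮, Dense A ∧ OHIIn A

/-- A dense subset of an OHI subspace is OHI. -/
lemma ohiIn_of_denseIn {A D : Set X} (hA : OHIIn A) (hD : DenseIn D A) : OHIIn D := by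
  rintro T ⟨hTD, hDT⟩
  have hclTD : closure D ⊆ closure T := by
    have := closure_mono hDT
    rwa [closure_closure] at this
  obtain ⟨T', hT'T, hT'A, U, hU, rfl⟩ := hA T ⟨hTD.trans hD.1, hD.2.trans hclTD⟩
  have hUAD : U ∩ A ⊆ D := hT'T.trans hTD
  refine ⟨U ∩ A, hT'T, ⟨hUAD, hD.1.trans hT'A.2⟩, U, hU, ?_⟩
  exact subset_antisymm (fun x hx => ⟨hx.1, hUAD hx⟩) (fun x hx => ⟨hx.1, hD.1 hx.2⟩)

/-- There is a maximal pairwise-disjoint family of sets satisfying `P`. -/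
lemma exists_maximal_disjoint {α : Type u} (P : Set α → Prop) :
    ∃ V : Set (Set α), (∀ O ∈ V, P O) ∧ V.PairwiseDisjoint id ∧
      ∀ O, P O → (∀ O' ∈ V, Disjoint O O') → O ∈ V := by
  have hchain : ∀ c ⊆ {F : Set (Set α) | (∀ O ∈ F, P O) ∧ F.PairwiseDisjoint id},
      IsChain (· ⊆ ·) c → ∃ ub ∈ {F : Set (Set α) | (∀ O ∈ F, P O) ∧ F.PairwiseDisjoint id},
        ∀ s ∈ c, s ⊆ ub := by
    intro c hc hch
    refine ⟨⋃₀ c, ⟨?_, ?_⟩, fun s hs => subset_sUnion_of_mem hs⟩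
    · rintro O ⟨F, hF, hOF⟩
      exact (hc hF).1 O hOF
    · intro x hx y hy hxy
      obtain ⟨F, hF, hxF⟩ := hx
      obtain ⟨F', hF', hyF⟩ := hy
      rcases hch.total hF hF' with h | h
      · exact (hc hF').2 (h hxF) hyF hxy
      · exact (hc hF).2 hxF (h hyF) hxy
  obtain ⟨M, hM⟩ := zorn_subset {F : Set (Set α) | (∀ O ∈ F, P O) ∧ F.PairwiseDisjoint id} hchain
  refine ⟨M, hM.1.1, hM.1.2, fun O hO hdisj => ?_⟩
  have h : insert O M ∈ {F : Set (Set α) | (∀ O ∈ F, P O) ∧ F.PairwiseDisjoint id} := by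
    constructor
    · rintro O' (rfl | hO')
      · exact hO
      · exact hM.1.1 O' hO'
    · intro x hx y hy hxy
      rcases hx with rfl | hx
      · rcases hy with rfl | hy
        · exact absurd rfl hxy
        · exact hdisj y hy
      · rcases hy with rfl | hy
        · exact (hdisj x hx).symm
        · exact hM.1.2 hx hy hxy
  exact hM.2 h (subset_insert O M) (mem_insert O M)

theorem stmt_18 (lam mu kap : Cardinal.{u}) (hlam : ℵ₀ ≤ lam)
    (h1 : lam < mu) (h2 : mu < kap) (X : Type u) [TopologicalSpace X]
    (hcell : ∀ 𝒰 : Set (Set X), (∀ U ∈ 𝒰, IsOpen U ∧ U.Nonempty) →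
      𝒰.PairwiseDisjoint id → #↥𝒰 ≤ mu)
    (hl : PartitionOHI X lam) (hk : PartitionOHI X kap) :
    PartitionOHI X mu := by
  classical
  obtain ⟨𝒜, hAcard, hAdis, hAcov, hAmem⟩ := hl
  obtain ⟨ℬ, hBcard, hBdis, hBcov, hBmem⟩ := hk
  have hmu : ℵ₀ ≤ mu := hlam.trans h1.le
  -- Fat regions for a subspace A
  set Fat : Set X → Set X → Prop := fun A O =>
    O.Nonempty ∧ IsOpen O ∧ ∃ S : Set (Set X), S ⊆ ℬ ∧ #↥S ≤ mu ∧
      O ⊆ closure (⋃₀ S ∩ A) with hFatDef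
  -- maximal disjoint families of fat regions
  have hmax : ∀ A : Set X, ∃ V : Set (Set X), (∀ O ∈ V, Fat A O) ∧ V.PairwiseDisjoint id ∧
      ∀ O, Fat A O → (∀ O' ∈ V, Disjoint O O') → O ∈ V :=
    fun A => exists_maximal_disjoint (Fat A)
  choose V hVfat hVdis hVmax using hmax
  -- witness column families
  have hsel : ∀ A O : Set X, ∃ S : Set (Set X), S ⊆ ℬ ∧ #↥S ≤ mu ∧
      (Fat A O → O ⊆ closure (⋃₀ S ∩ A)) := by
    intro A O
    by_cases h : Fat A O
    · obtain ⟨S, h1, h2, h3⟩ := h.2.2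
      exact ⟨S, h1, h2, fun _ => h3⟩
    · exact ⟨∅, empty_subset _, by simp, fun h' => absurd h' h⟩
  choose Sel hSelB hSelCard hSelDense using hsel
  -- the set of used columns
  set Sig : Set (Set X) := ⋃ (A : ↥𝒜), ⋃ (O : ↥(V (A : Set X))), Sel (A : Set X) (O : Set X)
    with hSigdef
  have hVcard : ∀ A : Set X, #↥(V A) ≤ mu := by
    intro A
    refine hcell (V A) (fun O hO => ⟨(hVfat A O hO).2.1, (hVfat A O hO).1⟩) (hVdis A)
  have hSigcard : #↥Sig ≤ mu := by
    calc #↥Sig ≤ sum fun A : ↥𝒜 => #↥(⋃ (O : ↥(V (A : Set X))), Sel (A : Set X) (O : Set X)) :=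
          mk_iUnion_le_sum_mk
    _ ≤ sum fun _ : ↥𝒜 => mu := by
          refine sum_le_sum _ _ fun A => ?_
          calc #↥(⋃ (O : ↥(V (A : Set X))), Sel (A : Set X) (O : Set X))
              ≤ sum fun O : ↥(V (A : Set X)) => #↥(Sel (A : Set X) (O : Set X)) :=
                mk_iUnion_le_sum_mk
            _ ≤ sum fun _ : ↥(V (A : Set X)) => mu :=
                sum_le_sum _ _ fun O => hSelCard _ _
            _ = #↥(V (A : Set X)) * mu := sum_const' _ _
            _ ≤ mu * mu := mul_le_mul_left (hVcard _) _
            _ = mu := mul_eq_self hmu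
    _ = #↥𝒜 * mu := sum_const' _ _
    _ ≤ mu * mu := by rw [hAcard]; exact mul_le_mul_left h1.le _
    _ = mu := mul_eq_self hmu
  -- choose the new core columns
  have hBminus : mu ≤ #↥(ℬ \ Sig) := by
    by_contra h
    push_neg at h
    have hsplit : ℬ ⊆ (ℬ \ Sig) ∪ Sig := by
      intro x hx
      by_cases hxSig : x ∈ Sig
      · exact Or.inr hxSig
      · exact Or.inl ⟨hx, hxSig⟩
    have : kap ≤ mu := by
      calc kap = #↥ℬ := hBcard.symm
        _ ≤ #↥((ℬ \ Sig) ∪ Sig) := mk_le_mk_of_subset hsplit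
        _ ≤ #↥(ℬ \ Sig) + #↥Sig := mk_union_le _ _
        _ ≤ mu + mu := add_le_add h.le hSigcard
        _ = mu := add_eq_self hmu
    exact absurd this (not_le.mpr h2)
  obtain ⟨I, hIsub, hIcard⟩ := le_mk_iff_exists_subset.mp hBminus
  set W : Set X := ⋃₀ I with hWdef
  -- density of A \ W for A ∈ 𝒜
  have hdense : ∀ A ∈ 𝒜, Dense (A \ W) := by
    intro A hA
    rw [dense_iff_inter_open]
    intro U hUop hUne
    by_cases hUG : (U ∩ ⋃₀ (V A)).Nonempty
    · obtain ⟨x, hxU, O, hOV, hxO⟩ := hUG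
      have hfat := hVfat A O hOV
      have hxcl : x ∈ closure (⋃₀ Sel A O ∩ A) := hSelDense A O hfat hxO
      obtain ⟨y, hyUO, hy⟩ := mem_closure_iff.mp hxcl (U ∩ O) (hUop.inter hfat.2.1) ⟨hxU, hxO⟩
      obtain ⟨⟨B', hB'Sel, hyB'⟩, hyA⟩ := hy
      refine ⟨y, hyUO.1, hyA, ?_⟩
      -- y ∉ W
      rintro ⟨B'', hB''I, hyB''⟩
      have hB'Sig : B' ∈ Sig := by
        refine mem_iUnion.mpr ⟨⟨A, hA⟩, mem_iUnion.mpr ⟨⟨O, hOV⟩, hB'Sel⟩⟩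
      have hne : B'' ≠ B' := fun h => (hIsub hB''I).2 (h ▸ hB'Sig)
      exact absurd hyB' (disjoint_left.mp (hBdis (hIsub hB''I).1 (hSelB A O hB'Sel) hne) hyB'')
    · -- U misses all fat regions of A; show U ⊄ closure (W ∩ A)
      have hUnsub : ¬ U ⊆ closure (W ∩ A) := by
        intro hsub
        have hfatU : Fat A U := by
          refine ⟨hUne, hUop, I, fun B hB => (hIsub hB).1, hIcard.le, ?_⟩
          rwa [hWdef] at hsub
        have hdisj : ∀ O' ∈ V A, Disjoint U O' := by
          intro O' hO'
          rw [disjoint_left]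
          intro x hxU hxO'
          exact hUG ⟨x, hxU, O', hO', hxO'⟩
        have hUV : U ∈ V A := hVmax A U hfatU hdisj
        obtain ⟨x, hx⟩ := hUne
        exact hUG ⟨x, hx, U, hUV, hx⟩
      obtain ⟨z, hzU, hzcl⟩ := not_subset.mp hUnsub
      have hU'op : IsOpen (U \ closure (W ∩ A)) := hUop.sdiff isClosed_closure
      obtain ⟨x, hxU', hxA⟩ := (hAmem A hA).1.inter_open_nonempty _ hU'op ⟨z, hzU, hzcl⟩
      refine ⟨x, hxU'.1, hxA, fun hxW => hxU'.2 (subset_closure ⟨hxW, hxA⟩)⟩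
  -- the new partition
  refine ⟨((fun A => A \ W) '' 𝒜) ∪ I, ?_, ?_, ?_, ?_⟩
  · -- cardinality
    refine le_antisymm ?_ ?_
    · calc #↥(((fun A => A \ W) '' 𝒜) ∪ I) ≤ #↥((fun A => A \ W) '' 𝒜) + #↥I :=
            mk_union_le _ _
        _ ≤ lam + mu := add_le_add ((mk_image_le).trans_eq hAcard) hIcard.le
        _ ≤ mu + mu := add_le_add h1.le le_rfl
        _ = mu := add_eq_self hmu
    · rw [← hIcard]
      exact mk_le_mk_of_subset subset_union_right
  · -- pairwise disjoint
    rintro x (⟨A, hA, rfl⟩ | hxI) y (⟨A', hA', rfl⟩ | hyI) hxy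
    · have hAA' : A ≠ A' := fun h => hxy (by rw [h])
      exact ((hAdis hA hA' hAA').mono diff_subset diff_subset)
    · refine disjoint_left.mpr fun z hz hzy => hz.2 ⟨y, hyI, hzy⟩
    · refine disjoint_left.mpr fun z hz hzy => hzy.2 ⟨x, hxI, hz⟩
    · exact hBdis (hIsub hxI).1 (hIsub hyI).1 hxy
  · -- covers
    apply eq_univ_of_forall
    intro x
    have hxA : x ∈ ⋃₀ 𝒜 := hAcov ▸ mem_univ x
    obtain ⟨A, hA, hxa⟩ := hxA
    by_cases hxW : x ∈ W
    · obtain ⟨B, hBI, hxB⟩ := hxW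
      exact ⟨B, Or.inr hBI, hxB⟩
    · exact ⟨A \ W, Or.inl ⟨A, hA, rfl⟩, hxa, hxW⟩
  · -- dense and OHI
    rintro D (⟨A, hA, rfl⟩ | hDI)
    · refine ⟨hdense A hA, ?_⟩
      refine ohiIn_of_denseIn (hAmem A hA).2 ⟨diff_subset, fun x _ => (hdense A hA) x⟩
    · exact hBmem D (hIsub hDI).1
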